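/- With p and Y as in the context, for every ε > 0 the probability under p that Y falls below −ε satisfies ∑_{s ∈ ι : Y(s) < −ε} p(s) ≤ 12‖φ₁ − φ₀‖² / ε². -/

import Mathlib

/-- With `p s = |⟨e_s, φ₀⟩|²` and
`Y s = 2·Re[(⟨e_s, φ₁⟩ − ⟨e_s, φ₀⟩)/⟨e_s, φ₀⟩]` (where `⟨e_s, φ⟩ = φ s` is the
coefficient of `φ` in the standard orthonormal basis of `ℂ^ι`), for every `ε > 0`
the probability under `p` that `Y < −ε` is at most `12‖φ₁ − φ₀‖²/ε²`. -/
theorem stmt5 {ι : Type*} [Fintype ι] [Nonempty ι]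
    (φ₀ φ₁ : EuclideanSpace ℂ ι) (h₀ : ‖φ₀‖ = 1) (h₁ : ‖φ₁‖ = 1)
    (hne : ∀ s, φ₀ s ≠ 0)
    (p Y : ι → ℝ)
    (hp : ∀ s, p s = ‖φ₀ s‖ ^ 2)
    (hY : ∀ s, Y s = 2 * ((φ₁ s - φ₀ s) / φ₀ s).re)
    (ε : ℝ) (hε : 0 < ε) :
    ∑ s ∈ Finset.univ.filter (fun s => Y s < -ε), p s
      ≤ 12 * ‖φ₁ - φ₀‖ ^ 2 / ε ^ 2 := by
  have hnorm : ‖φ₁ - φ₀‖ ^ 2 = ∑ s, ‖φ₁ s - φ₀ s‖ ^ 2 := by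
    rw [EuclideanSpace.norm_eq, Real.sq_sqrt (by positivity)]
    simp [PiLp.sub_apply]
  have term : ∀ s, Y s < -ε → p s ≤ 4 / ε ^ 2 * ‖φ₁ s - φ₀ s‖ ^ 2 := by
    intro s hs
    have h1 : ε ≤ |Y s| := le_abs.mpr (Or.inr (by linarith))
    have h2 : |Y s| ≤ 2 * ‖(φ₁ s - φ₀ s) / φ₀ s‖ := by
      rw [hY s, abs_mul, abs_two]
      have := Complex.abs_re_le_norm ((φ₁ s - φ₀ s) / φ₀ s)
      linarith
    have h3 : ε * ‖φ₀ s‖ ≤ 2 * ‖φ₁ s - φ₀ s‖ := by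
      have hφ : (0 : ℝ) < ‖φ₀ s‖ := norm_pos_iff.mpr (hne s)
      rw [norm_div] at h2
      calc ε * ‖φ₀ s‖ ≤ (2 * (‖φ₁ s - φ₀ s‖ / ‖φ₀ s‖)) * ‖φ₀ s‖ := by
            exact mul_le_mul_of_nonneg_right (h1.trans h2) hφ.le
        _ = 2 * ‖φ₁ s - φ₀ s‖ := by rw [mul_assoc, div_mul_cancel₀ _ hφ.ne']
    have h4 : ε ^ 2 * p s ≤ 4 * ‖φ₁ s - φ₀ s‖ ^ 2 := by
      rw [hp s]
      have := mul_le_mul h3 h3 (by positivity) (by positivity)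
      nlinarith
    rw [div_mul_eq_mul_div, le_div_iff₀ (by positivity)]
    nlinarith
  calc ∑ s ∈ Finset.univ.filter (fun s => Y s < -ε), p s
      ≤ ∑ s ∈ Finset.univ.filter (fun s => Y s < -ε),
          4 / ε ^ 2 * ‖φ₁ s - φ₀ s‖ ^ 2 := by
        refine Finset.sum_le_sum fun s hs => term s ?_
        simpa using hs
    _ ≤ ∑ s, 4 / ε ^ 2 * ‖φ₁ s - φ₀ s‖ ^ 2 :=
        Finset.sum_le_sum_of_subset_of_nonneg (Finset.filter_subset _ _)
          (fun s _ _ => by positivity)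
    _ = 4 / ε ^ 2 * ‖φ₁ - φ₀‖ ^ 2 := by rw [hnorm, Finset.mul_sum]
    _ ≤ 12 * ‖φ₁ - φ₀‖ ^ 2 / ε ^ 2 := by
        rw [div_mul_eq_mul_div]
        apply div_le_div_of_nonneg_right ?_ (by positivity) |>.trans le_rfl
        nlinarith [norm_nonneg (φ₁ - φ₀)]
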